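/- For every integer n ≥ 0 and parameters a, b, the finite identity ∑_{j=0}^{n} (b;q)_j (1 - b q^{2j}) (b/a;q)_j a^j q^{j²} / ((1-b)(q;q)_j (aq;q)_j) = ((bq;q)_n/(aq;q)_n) ∑_{j=0}^{n} (b/a;q)_j a^j q^{(n+1)j} / (q;q)_j holds as an identity of rational functions in q, a, b. -/

import Mathlib

/-- the field of rational functions in the three variables `q`, `a`, `b` -/
noncomputable abbrev K3 : Type := FractionRing (MvPolynomial (Fin 3) ℚ)

/-- finite q-Pochhammer symbol `(x;q)_m` -/
noncomputable def qPoch (x q : K3) (m : ℕ) : K3 := ∏ i ∈ Finset.range m, (1 - x * q ^ i)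

namespace AS
open MvPolynomial

noncomputable def q : K3 := algebraMap (MvPolynomial (Fin 3) ℚ) K3 (X 0)
noncomputable def a : K3 := algebraMap (MvPolynomial (Fin 3) ℚ) K3 (X 1)
noncomputable def b : K3 := algebraMap (MvPolynomial (Fin 3) ℚ) K3 (X 2)

lemma alg_ne_zero {p : MvPolynomial (Fin 3) ℚ} (hp : p ≠ 0) :
    algebraMap (MvPolynomial (Fin 3) ℚ) K3 p ≠ 0 :=
  fun h => hp ((IsFractionRing.to_map_eq_zero_iff).mp h)

lemma ha : a ≠ 0 := alg_ne_zero (X_ne_zero 1)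

lemma hq1 (i : ℕ) : (1 : K3) - q ^ (i + 1) ≠ 0 := by
  have : (1 : K3) - q ^ (i + 1) = algebraMap (MvPolynomial (Fin 3) ℚ) K3 (1 - X 0 ^ (i + 1)) := by
    simp [q]
  rw [this]
  refine alg_ne_zero fun h => ?_
  have := congrArg (eval (fun _ => (0 : ℚ))) h
  simp [pow_succ] at this

lemma haq (i : ℕ) : (1 : K3) - a * q ^ i ≠ 0 := by
  have : (1 : K3) - a * q ^ i = algebraMap (MvPolynomial (Fin 3) ℚ) K3 (1 - X 1 * X 0 ^ i) := by
    simp [q, a]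
  rw [this]
  refine alg_ne_zero fun h => ?_
  have := congrArg (eval (fun _ => (0 : ℚ))) h
  simp at this

lemma hbq (i : ℕ) : (1 : K3) - b * q ^ i ≠ 0 := by
  have : (1 : K3) - b * q ^ i = algebraMap (MvPolynomial (Fin 3) ℚ) K3 (1 - X 2 * X 0 ^ i) := by
    simp [q, b]
  rw [this]
  refine alg_ne_zero fun h => ?_
  have := congrArg (eval (fun _ => (0 : ℚ))) h
  simp at this

lemma habq (i : ℕ) : a - b * q ^ i ≠ 0 := by
  have : a - b * q ^ i = algebraMap (MvPolynomial (Fin 3) ℚ) K3 (X 1 - X 2 * X 0 ^ i) := by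
    simp [q, a, b]
  rw [this]
  refine alg_ne_zero fun h => ?_
  have := congrArg (eval (fun j => if j = 1 then (1 : ℚ) else 0)) h
  simp at this

/-- `(q;q)_m ≠ 0` -/
lemma hQ (m : ℕ) : qPoch q q m ≠ 0 := by
  rw [qPoch, Finset.prod_ne_zero_iff]
  intro i _
  have : (1 : K3) - q * q ^ i = 1 - q ^ (i + 1) := by rw [pow_succ]; ring
  rw [this]; exact hq1 i

/-- `(aq;q)_m ≠ 0` -/
lemma hA (m : ℕ) : qPoch (a * q) q m ≠ 0 := by
  rw [qPoch, Finset.prod_ne_zero_iff]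
  intro i _
  have : (1 : K3) - a * q * q ^ i = 1 - a * q ^ (i + 1) := by rw [pow_succ]; ring
  rw [this]; exact haq (i + 1)

lemma poch_succ (x : K3) (m : ℕ) : qPoch x q (m + 1) = qPoch x q m * (1 - x * q ^ m) :=
  Finset.prod_range_succ _ m

lemma poch_zero (x : K3) : qPoch x q 0 = 1 := Finset.prod_range_zero _

/-- `(b;q)_{m+1} = (1-b)·(bq;q)_m` -/
lemma hb_shift (m : ℕ) : qPoch b q (m + 1) = (1 - b) * qPoch (b * q) q m := by
  rw [qPoch, Finset.prod_range_succ', qPoch]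
  simp only [pow_zero, mul_one]
  rw [mul_comm]
  congr 1
  exact Finset.prod_congr rfl fun i _ => by rw [pow_succ]; ring

noncomputable def c (j : ℕ) : K3 := qPoch (b / a) q j * a ^ j / qPoch q q j

lemma c_zero : c 0 = 1 := by simp [c, poch_zero, qPoch]

lemma key_poch (j : ℕ) :
    qPoch (b / a) q (j + 1) * a ^ (j + 1) = qPoch (b / a) q j * a ^ j * (a - b * q ^ j) := by
  have h2 : (1 : K3) - b / a * q ^ j = (a - b * q ^ j) / a := by
    rw [sub_div, div_self ha, div_mul_eq_mul_div]
  rw [poch_succ, h2, pow_succ]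
  calc qPoch (b / a) q j * ((a - b * q ^ j) / a) * (a ^ j * a)
      = qPoch (b / a) q j * a ^ j * ((a - b * q ^ j) / a * a) := by ring
    _ = qPoch (b / a) q j * a ^ j * (a - b * q ^ j) := by rw [div_mul_cancel₀ _ ha]

lemma hc (j : ℕ) : c (j + 1) * (1 - q ^ (j + 1)) = c j * (a - b * q ^ j) := by
  have h1 : qPoch q q (j + 1) = qPoch q q j * (1 - q ^ (j + 1)) := by
    rw [poch_succ, pow_succ]; ring_nf
  rw [c, c, h1, key_poch, div_mul_eq_mul_div,
    mul_div_mul_right _ _ (hq1 j), div_mul_eq_mul_div]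

noncomputable def d (n j : ℕ) : K3 := c (j + 1) * (1 - q ^ (j + 1)) * q ^ (n * j)

lemma inner (n : ℕ) :
    ∑ j ∈ Finset.range (n + 1),
        c j * q ^ (n * j) * ((1 - b * q ^ n) * q ^ j - (1 - a * q ^ n))
      = c (n + 1) * (1 - q ^ (n + 1)) * q ^ (n * (n + 1)) := by
  have hterm : ∀ j, c (j + 1) * q ^ (n * (j + 1)) * ((1 - b * q ^ n) * q ^ (j + 1) - (1 - a * q ^ n))
      = q ^ n * (d n (j + 1) - d n j) := by
    intro j
    rw [d, d, hc (j + 1)]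
    have e1 : n * (j + 1) = n * j + n := by ring
    rw [e1, pow_add, pow_succ]
    ring
  have h0 : c 0 * q ^ (n * 0) * ((1 - b * q ^ n) * q ^ 0 - (1 - a * q ^ n)) = q ^ n * d n 0 := by
    have h := hc 0
    rw [c_zero, one_mul, pow_zero] at h
    simp only [Nat.mul_zero, pow_zero, mul_one, one_mul, c_zero, d]
    linear_combination (-(q ^ n)) * h
  rw [Finset.sum_range_succ']
  simp only [hterm]
  rw [← Finset.mul_sum, Finset.sum_range_sub (d n), h0]
  have e2 : n * (n + 1) = n * n + n := by ring
  rw [e2, pow_add, d]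
  ring

noncomputable def S (n : ℕ) : K3 := ∑ j ∈ Finset.range (n + 1), c j * q ^ ((n + 1) * j)

noncomputable def R (n : ℕ) : K3 := qPoch (b * q) q n / qPoch (a * q) q n * S n

noncomputable def T (j : ℕ) : K3 :=
  qPoch b q j * (1 - b * q ^ (2 * j)) * qPoch (b / a) q j * a ^ j * q ^ (j ^ 2) /
    ((1 - b) * qPoch q q j * qPoch (a * q) q j)

lemma hb1 : (1 : K3) - b ≠ 0 := by simpa using hbq 0

lemma hstar (n : ℕ) : (1 - b * q ^ (n + 1)) * S (n + 1)
    = (1 - a * q ^ (n + 1)) * (S n + c (n + 1) * q ^ ((n + 1) * (n + 1)))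
      + c (n + 1) * (a - b * q ^ (n + 1)) * q ^ ((n + 1) * (n + 1 + 1)) := by
  have h3 := inner (n + 1)
  have h1 : ∑ j ∈ Finset.range (n + 1 + 1),
        c j * q ^ ((n + 1) * j) * ((1 - b * q ^ (n + 1)) * q ^ j - (1 - a * q ^ (n + 1)))
      = (1 - b * q ^ (n + 1)) * S (n + 1)
        - (1 - a * q ^ (n + 1)) * ∑ j ∈ Finset.range (n + 1 + 1), c j * q ^ ((n + 1) * j) := by
    rw [S, Finset.mul_sum, Finset.mul_sum, ← Finset.sum_sub_distrib]
    refine Finset.sum_congr rfl fun j _ => ?_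
    have e : (n + 1 + 1) * j = (n + 1) * j + j := by ring
    rw [e, pow_add]
    ring
  have h2 : ∑ j ∈ Finset.range (n + 1 + 1), c j * q ^ ((n + 1) * j)
      = S n + c (n + 1) * q ^ ((n + 1) * (n + 1)) := by
    rw [Finset.sum_range_succ, S]
  rw [h1, h2] at h3
  have h4 := hc (n + 1)
  linear_combination h3 + q ^ ((n + 1) * (n + 1 + 1)) * h4

lemma hT (n : ℕ) : T (n + 1)
    = qPoch (b * q) q n * (1 - b * q ^ (2 * (n + 1))) * (c (n + 1) * q ^ ((n + 1) ^ 2))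
        / qPoch (a * q) q (n + 1) := by
  rw [T, hb_shift n, c]
  field_simp [hb1, hQ (n + 1), hA (n + 1)]

lemma step (n : ℕ) : R (n + 1) = R n + T (n + 1) := by
  rw [R, R, hT, poch_succ (b * q), poch_succ (a * q)]
  have eb : (1 : K3) - b * q * q ^ n = 1 - b * q ^ (n + 1) := by rw [pow_succ]; ring
  have ea : (1 : K3) - a * q * q ^ n = 1 - a * q ^ (n + 1) := by rw [pow_succ]; ring
  rw [eb, ea]
  have goal' : qPoch (b * q) q n * (1 - b * q ^ (n + 1)) * S (n + 1)
      = qPoch (b * q) q n * (1 - a * q ^ (n + 1)) * S n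
        + qPoch (b * q) q n * (1 - b * q ^ (2 * (n + 1))) * (c (n + 1) * q ^ ((n + 1) ^ 2)) := by
    linear_combination qPoch (b * q) q n * hstar n
  rw [div_mul_eq_mul_div, goal', add_div]
  congr 1
  rw [show qPoch (b * q) q n * (1 - a * q ^ (n + 1)) * S n
      = qPoch (b * q) q n * S n * (1 - a * q ^ (n + 1)) from by ring,
    mul_div_mul_right _ _ (haq (n + 1)), ← div_mul_eq_mul_div]

lemma main (n : ℕ) : ∑ j ∈ Finset.range (n + 1), T j = R n := by
  induction n with
  | zero =>
    rw [Finset.sum_range_one, T, R, S, Finset.sum_range_one]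
    simp [poch_zero, c_zero]
    exact hb1
  | succ n ih =>
    rw [Finset.sum_range_succ, ih, step]

theorem final (n : ℕ) :
    (∑ j ∈ Finset.range (n + 1),
        qPoch b q j * (1 - b * q ^ (2 * j)) * qPoch (b / a) q j * a ^ j * q ^ (j ^ 2) /
          ((1 - b) * qPoch q q j * qPoch (a * q) q j)) =
    qPoch (b * q) q n / qPoch (a * q) q n *
      ∑ j ∈ Finset.range (n + 1),
        qPoch (b / a) q j * a ^ j * q ^ ((n + 1) * j) / qPoch q q j := by
  have h : (∑ j ∈ Finset.range (n + 1),
      qPoch b q j * (1 - b * q ^ (2 * j)) * qPoch (b / a) q j * a ^ j * q ^ (j ^ 2) /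
        ((1 - b) * qPoch q q j * qPoch (a * q) q j)) = ∑ j ∈ Finset.range (n + 1), T j :=
    Finset.sum_congr rfl fun j _ => by rw [T]
  rw [h, main n, R, S]
  congr 1
  refine Finset.sum_congr rfl fun j _ => ?_
  rw [c, div_mul_eq_mul_div]

end AS

/-- Andrews' finite form generalizing Shanks' identity (Andrews 1986, Lemma 2), as an
identity of rational functions in `q`, `a`, `b`. -/
theorem andrews_shanks_identity (n : ℕ) :
    letI q : K3 := algebraMap (MvPolynomial (Fin 3) ℚ) K3 (MvPolynomial.X 0)
    letI a : K3 := algebraMap (MvPolynomial (Fin 3) ℚ) K3 (MvPolynomial.X 1)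
    letI b : K3 := algebraMap (MvPolynomial (Fin 3) ℚ) K3 (MvPolynomial.X 2)
    (∑ j ∈ Finset.range (n + 1),
        qPoch b q j * (1 - b * q ^ (2 * j)) * qPoch (b / a) q j * a ^ j * q ^ (j ^ 2) /
          ((1 - b) * qPoch q q j * qPoch (a * q) q j)) =
    qPoch (b * q) q n / qPoch (a * q) q n *
      ∑ j ∈ Finset.range (n + 1),
        qPoch (b / a) q j * a ^ j * q ^ ((n + 1) * j) / qPoch q q j := by
  exact AS.final n
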